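/- Let X be a small category, F a field, and R ∈ rep(X, Vect_F). Then R lies in the essential image of free_* : rep(X, Set_*) → rep(X, Vect_F) if and only if R has a multiplicative basis, i.e., a choice of basis B(x) of R(x) for every object x such that for every morphism f : x → y and every b ∈ B(x), the vector R(f)(b) is either an element of B(y) or zero. -/

import Mathlib

open CategoryTheory CategoryTheory.Limits

/-- The reduced free vector space functor `free_* : Set_* ⥤ Vect_F`. -/
noncomputable def freeStar (F : Type) [Field F] : Pointed.{0} ⥤ ModuleCat.{0} F where
  obj S := ModuleCat.of F ((S.X →₀ F) ⧸ Submodule.span F {Finsupp.single S.point (1 : F)})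
  map {S T} f := ModuleCat.ofHom (Submodule.mapQ _ _ (Finsupp.lmapDomain F F f.toFun)
    (by
      rw [Submodule.span_le, Set.singleton_subset_iff, SetLike.mem_coe, Submodule.mem_comap]
      simp only [Finsupp.lmapDomain_apply, Finsupp.mapDomain_single, f.map_point]
      exact Submodule.mem_span_singleton_self _))
  map_id S := by
    refine ModuleCat.hom_ext (Submodule.linearMap_qext _ ?_)
    ext x
    dsimp
    erw [Submodule.mapQ_apply]
    simp only [Finsupp.lmapDomain_apply, Finsupp.mapDomain_id]
  map_comp {S T U} f g := by
    refine ModuleCat.hom_ext (Submodule.linearMap_qext _ ?_)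
    ext x
    dsimp
    erw [Submodule.mapQ_apply]
    simp only [Finsupp.lmapDomain_apply, Finsupp.mapDomain_single, Function.comp_apply]

variable (F : Type) [Field F]

noncomputable def qb (S : Pointed.{0}) (a : S.X) : (freeStar F).obj S :=
  (Submodule.Quotient.mk (Finsupp.single a (1:F)) :
    (S.X →₀ F) ⧸ Submodule.span F {Finsupp.single S.point (1 : F)})

theorem qb_point (S : Pointed.{0}) : qb F S S.point = 0 :=
  (Submodule.Quotient.mk_eq_zero _).2 (Submodule.mem_span_singleton_self _)

theorem freeStar_map_qb {S T : Pointed.{0}} (f : S ⟶ T) (a : S.X) :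
    (freeStar F).map f (qb F S a) = qb F T (f.toFun a) := by
  simp only [freeStar, qb]
  erw [Submodule.mapQ_apply]
  simp only [Finsupp.lmapDomain_apply, Finsupp.mapDomain_single]
  rw [Submodule.span_le, Set.singleton_subset_iff, SetLike.mem_coe, Submodule.mem_comap]
  simp only [Finsupp.lmapDomain_apply, Finsupp.mapDomain_single, f.map_point]
  exact Submodule.mem_span_singleton_self _

theorem qb_li (S : Pointed.{0}) :
    LinearIndependent F (fun a : {a : S.X // a ≠ S.point} => qb F S a.1) := by
  have hψ : Finsupp.single S.point (1 : F) ∈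
      LinearMap.ker (Finsupp.lsubtypeDomain (M := F) (R := F) {a : S.X | a ≠ S.point}) := by
    rw [LinearMap.mem_ker]
    ext a
    simp [Finsupp.lsubtypeDomain, Finsupp.subtypeDomain, Finsupp.single_apply,
      (a.2 : a.1 ≠ S.point).symm]
  set ψ : (freeStar F).obj S →ₗ[F] ({a : S.X | a ≠ S.point} →₀ F) :=
    Submodule.liftQ (Submodule.span F {Finsupp.single S.point (1 : F)})
      (Finsupp.lsubtypeDomain (M := F) (R := F) {a : S.X | a ≠ S.point}) (by rwa [Submodule.span_le, Set.singleton_subset_iff, SetLike.mem_coe])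
  have key : (ψ ∘ fun a : {a : S.X // a ≠ S.point} => qb F S a.1)
      = fun a : {a : S.X // a ≠ S.point} => Finsupp.single a (1 : F) := by
    funext a
    show ψ (Submodule.Quotient.mk _) = _
    erw [Submodule.liftQ_apply]
    classical
    ext b
    rw [show (Finsupp.lsubtypeDomain (M := F) (R := F) {a : S.X | a ≠ S.point})
        (Finsupp.single a.1 1) b = Finsupp.single a.1 (1:F) b.1 from rfl]
    rw [Finsupp.single_apply, Finsupp.single_apply]
    simp [Subtype.ext_iff]
  refine LinearIndependent.of_comp ψ ?_
  rw [key]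
  exact (Finsupp.basisSingleOne (R := F) (ι := {a : S.X | a ≠ S.point})).linearIndependent.comp
    (fun a => a) (fun a b h => h)

theorem qb_span (S : Pointed.{0}) :
    Submodule.span F (Set.range fun a : {a : S.X // a ≠ S.point} => qb F S a.1) = ⊤ := by
  rw [eq_top_iff]
  change (⊤ : Submodule F ((S.X →₀ F) ⧸ Submodule.span F {Finsupp.single S.point (1 : F)})) ≤
    Submodule.span F (Set.range fun a : {a : S.X // a ≠ S.point} =>
      (qb F S a.1 : (S.X →₀ F) ⧸ Submodule.span F {Finsupp.single S.point (1 : F)}))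
  have h1 : (⊤ : Submodule F ((S.X →₀ F) ⧸ Submodule.span F {Finsupp.single S.point (1 : F)})) =
      Submodule.map (Submodule.mkQ (Submodule.span F {Finsupp.single S.point (1 : F)})) ⊤ := by
    rw [Submodule.map_top, Submodule.range_mkQ]
  rw [h1, ← (Finsupp.basisSingleOne (R := F) (ι := S.X)).span_eq, Submodule.map_span]
  apply Submodule.span_le.mpr
  rintro q ⟨l, ⟨a, rfl⟩, rfl⟩
  have hb : Finsupp.basisSingleOne (R := F) (ι := S.X) a = Finsupp.single a (1:F) := by
    rw [Finsupp.coe_basisSingleOne]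
  rw [hb]
  have hq : Submodule.mkQ _ (Finsupp.single a (1:F)) = qb F S a := rfl
  rw [hq]
  by_cases h : a = S.point
  · rw [h, qb_point]; exact Submodule.zero_mem _
  · exact Submodule.subset_span (s := Set.range fun a : {a : S.X // a ≠ S.point} => qb F S a.1) ⟨⟨a, h⟩, rfl⟩

section Backward
attribute [local instance] Classical.propDecidable
variable {X : Type} [SmallCategory X] {F : Type} [Field F] (R : X ⥤ ModuleCat.{0} F)
  (B : ∀ x : X, Set (R.obj x))

def optEquiv (σ : Type) : σ ≃ {a : Option σ // a ≠ none} where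
  toFun s := ⟨some s, by simp⟩
  invFun a := a.1.get (Option.ne_none_iff_isSome.mp a.2)
  left_inv s := rfl
  right_inv a := by
    obtain ⟨a, h⟩ := a
    cases a with
    | none => exact absurd rfl h
    | some s => rfl

variable (hz : ∀ x : X, (0 : R.obj x) ∉ B x)
  (hmul : ∀ (x y : X) (f : x ⟶ y), ∀ b ∈ B x, R.map f b ∈ B y ∨ R.map f b = 0)

noncomputable def ZB : X ⥤ Pointed.{0} where
  obj x := ⟨Option (B x), none⟩
  map {x y} f := ⟨fun a => a.bind fun b =>
    if h : (R.map f b.1 : R.obj y) ∈ B y then some ⟨R.map f b.1, h⟩ else none, rfl⟩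
  map_id x := by
    apply Pointed.Hom.ext
    funext a
    cases a with
    | none => rfl
    | some b =>
      have h1 : (R.map (𝟙 x)) b.1 = b.1 := by rw [R.map_id]; rfl
      show (if h : (R.map (𝟙 x)) b.1 ∈ B x
        then some (⟨(R.map (𝟙 x)) b.1, h⟩ : B x) else none) = some b
      rw [dif_pos (h1.symm ▸ b.2)]
      exact congrArg some (Subtype.ext h1)
  map_comp {x y z} f g := by
    apply Pointed.Hom.ext
    funext a
    cases a with
    | none => rfl
    | some b =>
      have hc : (R.map (f ≫ g)) b.1 = R.map g (R.map f b.1) := by rw [R.map_comp]; rfl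
      show (if h : (R.map (f ≫ g)) b.1 ∈ B z
          then some (⟨(R.map (f ≫ g)) b.1, h⟩ : B z) else none)
        = Option.bind (if h : (R.map f) b.1 ∈ B y
          then some (⟨(R.map f) b.1, h⟩ : B y) else none)
          (fun b' => if h : (R.map g) b'.1 ∈ B z then some ⟨(R.map g) b'.1, h⟩ else none)
      by_cases h : (R.map f) b.1 ∈ B y
      · rw [dif_pos h]
        show _ = (if h' : (R.map g) ((R.map f) b.1) ∈ B z
          then some (⟨(R.map g) ((R.map f) b.1), h'⟩ : B z) else none)
        by_cases h2 : (R.map g) ((R.map f) b.1) ∈ B z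
        · rw [dif_pos (hc ▸ h2 : (R.map (f ≫ g)) b.1 ∈ B z), dif_pos h2]
          exact congrArg some (Subtype.ext hc)
        · rw [dif_neg (by rw [hc]; exact h2), dif_neg h2]
      · rw [dif_neg h]
        have h0 : (R.map f) b.1 = 0 := (hmul x y f b.1 b.2).resolve_left h
        show (if h : (R.map (f ≫ g)) b.1 ∈ B z
          then some (⟨(R.map (f ≫ g)) b.1, h⟩ : B z) else none) = none
        rw [dif_neg (by rw [hc, h0, map_zero]; exact hz z)]

variable (hli : ∀ x : X, LinearIndependent F ((↑) : B x → R.obj x))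
  (hsp : ∀ x : X, Submodule.span F (B x) = ⊤)

noncomputable def bR (x : X) : Module.Basis (B x) F (R.obj x) :=
  Module.Basis.mk (hli x) (by rw [Subtype.range_coe]; exact (hsp x).ge)

noncomputable def bQ (x : X) : Module.Basis (B x) F ((freeStar F).obj ((ZB R B hz hmul).obj x)) :=
  (Module.Basis.mk (qb_li F ((ZB R B hz hmul).obj x)) (qb_span F _).ge).reindex
    ((optEquiv (B x)).symm)

theorem bQ_apply (x : X) (b : B x) :
    bQ R B hz hmul x b = qb F ((ZB R B hz hmul).obj x) (some b) := by
  rw [bQ]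
  erw [Module.Basis.reindex_apply, Equiv.symm_symm, Module.Basis.mk_apply]
  rfl

noncomputable def EB (x : X) :
    ((freeStar F).obj ((ZB R B hz hmul).obj x)) ≃ₗ[F] R.obj x :=
  (bQ R B hz hmul x).equiv (bR R B hli hsp x) (Equiv.refl _)

theorem EB_some (x : X) (b : B x) :
    EB R B hz hmul hli hsp x (qb F ((ZB R B hz hmul).obj x) (some b)) = b.1 := by
  rw [← bQ_apply, EB, Module.Basis.equiv_apply, Equiv.refl_apply, bR, Module.Basis.mk_apply]

theorem EB_none (x : X) :
    EB R B hz hmul hli hsp x (qb F ((ZB R B hz hmul).obj x) none) = 0 := by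
  rw [show qb F ((ZB R B hz hmul).obj x) none = 0 from qb_point F _, map_zero]

noncomputable def natIsoB : ZB R B hz hmul ⋙ freeStar F ≅ R :=
  NatIso.ofComponents (fun x => (EB R B hz hmul hli hsp x).toModuleIso) (by
    intro x y f
    refine ModuleCat.hom_ext (Module.Basis.ext (bQ R B hz hmul x) fun b => ?_)
    rw [ModuleCat.hom_comp, ModuleCat.hom_comp, LinearMap.comp_apply, LinearMap.comp_apply]
    rw [bQ_apply]
    show EB R B hz hmul hli hsp y ((freeStar F).map ((ZB R B hz hmul).map f) _)
      = R.map f (EB R B hz hmul hli hsp x _)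
    rw [freeStar_map_qb F ((ZB R B hz hmul).map f) (some b), EB_some]
    show EB R B hz hmul hli hsp y (qb F _
      (if h : (R.map f) b.1 ∈ B y then some (⟨(R.map f) b.1, h⟩ : B y) else none)) = _
    by_cases h : (R.map f) b.1 ∈ B y
    · exact (congrArg (fun o => EB R B hz hmul hli hsp y (qb F ((ZB R B hz hmul).obj y) o)) (dif_pos h)).trans (EB_some R B hz hmul hli hsp y _)
    · exact (congrArg (fun o => EB R B hz hmul hli hsp y (qb F ((ZB R B hz hmul).obj y) o)) (dif_neg h)).trans
        ((EB_none R B hz hmul hli hsp y).trans ((hmul x y f b.1 b.2).resolve_left h).symm)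
    )
end Backward

/-- A representation `R : X ⥤ Vect_F` lies in the essential image of
`free_* : rep(X, Set_*) ⥤ rep(X, Vect_F)` iff it has a multiplicative basis: a system of bases
such that every structure map sends every basis vector to a basis vector or to zero. -/
theorem stmt5 (X : Type) [SmallCategory X] (F : Type) [Field F]
    (R : X ⥤ ModuleCat.{0} F) :
    ((Functor.whiskeringRight X Pointed.{0} (ModuleCat.{0} F)).obj (freeStar F)).essImage R ↔
      ∃ B : ∀ x : X, Set (R.obj x),
        (∀ x : X, LinearIndependent F ((↑) : B x → R.obj x) ∧
          Submodule.span F (B x) = ⊤) ∧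
        (∀ (x y : X) (f : x ⟶ y), ∀ b ∈ B x, R.map f b ∈ B y ∨ R.map f b = 0) := by

  constructor
  · rintro ⟨Z, ⟨η⟩⟩
    refine ⟨fun x => (η.hom.app x) ''
        (Set.range fun a : {a : (Z.obj x).X // a ≠ (Z.obj x).point} => qb F (Z.obj x) a.1),
      fun x => ⟨?_, ?_⟩, ?_⟩
    · have hbij : Function.Bijective (η.hom.app x) :=
        ConcreteCategory.bijective_of_isIso (η.hom.app x)
      have h1 : LinearIndependent F ((η.hom.app x).hom ∘
          fun a : {a : (Z.obj x).X // a ≠ (Z.obj x).point} => qb F (Z.obj x) a.1) :=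
        (qb_li F (Z.obj x)).map' _ (LinearMap.ker_eq_bot.2 hbij.1)
      have h2 := (linearIndepOn_id_range_iff h1.injective).mpr h1
      rw [Set.range_comp] at h2
      exact h2
    · have hbij : Function.Bijective (η.hom.app x) :=
        ConcreteCategory.bijective_of_isIso (η.hom.app x)
      rw [← Submodule.map_span, qb_span, Submodule.map_top]
      exact LinearMap.range_eq_top.2 hbij.2
    · rintro x y f b ⟨q, ⟨a, rfl⟩, rfl⟩
      have hnat : R.map f (η.hom.app x (qb F (Z.obj x) a.1)) =
          η.hom.app y ((Z ⋙ freeStar F).map f (qb F (Z.obj x) a.1)) := by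
        have h2 := congrArg
          (fun g : (Z ⋙ freeStar F).obj x ⟶ R.obj y => g (qb F (Z.obj x) a.1))
          (η.hom.naturality f)
        exact h2.symm
      have h3 : (Z ⋙ freeStar F).map f (qb F (Z.obj x) a.1)
          = qb F (Z.obj y) ((Z.map f).toFun a.1) := freeStar_map_qb F (Z.map f) a.1
      by_cases hp : (Z.map f).toFun a.1 = (Z.obj y).point
      · right
        rw [hnat, h3, hp, qb_point, map_zero]
      · left
        rw [hnat, h3]
        exact ⟨qb F (Z.obj y) ((Z.map f).toFun a.1), ⟨⟨_, hp⟩, rfl⟩, rfl⟩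
  · rintro ⟨B, hb, hmul⟩
    have hz : ∀ x : X, (0 : R.obj x) ∉ B x := fun x h => (hb x).1.ne_zero ⟨0, h⟩ rfl
    exact ⟨ZB R B hz hmul,
      ⟨natIsoB R B hz hmul (fun x => (hb x).1) (fun x => (hb x).2)⟩⟩
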